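/- Let s be a positive integer and let T be a finite tree (a connected acyclic simple graph) with at least s vertices. Then there exist nonempty vertex subsets T_1, T_2, …, T_k forming an almost-partition of the vertex set of T such that, for every i ∈ [k], the subgraph of T induced on T_i is connected and s ≤ |T_i| ≤ 3s. -/

import Mathlib

open Finset

set_option linter.unusedSectionVars false

namespace TreeAP

variable {V : Type*} [Fintype V] [DecidableEq V] (T : SimpleGraph V)

/-- Reachability via walks whose support stays inside `S`. -/
def ReachIn (S : Finset V) (u w : V) : Prop :=
  ∃ p : T.Walk u w, ∀ x ∈ p.support, x ∈ S

/-- Connectedness of a finite vertex set, via walks in the ambient graph. -/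
def Conn (S : Finset V) : Prop :=
  S.Nonempty ∧ ∀ u ∈ S, ∀ w ∈ S, ReachIn T S u w

variable {T}

lemma ReachIn.refl {S : Finset V} {u : V} (hu : u ∈ S) : ReachIn T S u u :=
  ⟨SimpleGraph.Walk.nil, by simp [hu]⟩

lemma ReachIn.symm {S : Finset V} {u w : V} (h : ReachIn T S u w) : ReachIn T S w u := by
  obtain ⟨p, hp⟩ := h
  refine ⟨p.reverse, ?_⟩
  intro x hx
  rw [SimpleGraph.Walk.support_reverse, List.mem_reverse] at hx
  exact hp x hx

lemma ReachIn.trans {S : Finset V} {u w z : V} (h : ReachIn T S u w) (h' : ReachIn T S w z) :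
    ReachIn T S u z := by
  obtain ⟨p, hp⟩ := h
  obtain ⟨q, hq⟩ := h'
  refine ⟨p.append q, ?_⟩
  intro x hx
  rw [SimpleGraph.Walk.mem_support_append_iff] at hx
  rcases hx with hx | hx
  · exact hp x hx
  · exact hq x hx

lemma ReachIn.mem_left {S : Finset V} {u w : V} (h : ReachIn T S u w) : u ∈ S := by
  obtain ⟨p, hp⟩ := h; exact hp u p.start_mem_support

lemma ReachIn.mem_right {S : Finset V} {u w : V} (h : ReachIn T S u w) : w ∈ S := by
  obtain ⟨p, hp⟩ := h; exact hp w p.end_mem_support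

variable (T) in
/-- The connected component of `u` inside the finset `S`. -/
noncomputable def compOf (S : Finset V) (u : V) : Finset V :=
  @Finset.filter _ (fun w => ReachIn T S u w) (Classical.decPred _) S

lemma mem_compOf {S : Finset V} {u w : V} :
    w ∈ compOf T S u ↔ w ∈ S ∧ ReachIn T S u w := @Finset.mem_filter _ _ (Classical.decPred _) _ _

lemma compOf_subset {S : Finset V} {u : V} : compOf T S u ⊆ S := fun _ h => (mem_compOf.1 h).1

lemma self_mem_compOf {S : Finset V} {u : V} (hu : u ∈ S) : u ∈ compOf T S u :=
  mem_compOf.2 ⟨hu, ReachIn.refl hu⟩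

lemma compOf_eq_of_mem {S : Finset V} {u w : V} (hw : w ∈ compOf T S u) :
    compOf T S w = compOf T S u := by
  rw [mem_compOf] at hw
  ext z
  simp only [mem_compOf]
  exact ⟨fun hz => ⟨hz.1, hw.2.trans hz.2⟩, fun hz => ⟨hz.1, hw.2.symm.trans hz.2⟩⟩

lemma conn_compOf {S : Finset V} {u : V} (hu : u ∈ S) : Conn T (compOf T S u) := by
  refine ⟨⟨u, self_mem_compOf hu⟩, ?_⟩
  intro x hx y hy
  rw [mem_compOf] at hx hy
  obtain ⟨p, hp⟩ := hx.2
  obtain ⟨q, hq⟩ := hy.2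
  refine ⟨p.reverse.append q, ?_⟩
  intro z hz
  rw [SimpleGraph.Walk.mem_support_append_iff] at hz
  rw [mem_compOf]
  rcases hz with hz | hz
  · rw [SimpleGraph.Walk.support_reverse, List.mem_reverse] at hz
    refine ⟨hp z hz, ⟨p.takeUntil z hz, fun a ha => hp a (p.support_takeUntil_subset hz ha)⟩⟩
  · refine ⟨hq z hz, ⟨q.takeUntil z hz, fun a ha => hq a (q.support_takeUntil_subset hz ha)⟩⟩



variable {T : SimpleGraph V}
section Part2

lemma walk_to_insert {S : Finset V} {v : V} {W : Finset V} (hWS : W ⊆ S.erase v)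
    (hcl : ∀ u ∈ W, compOf T (S.erase v) u ⊆ W) :
    ∀ {u w : V} (p : T.Walk u w), (∀ x ∈ p.support, x ∈ S) → u ∈ W → w = v →
      ReachIn T (insert v W) u v := by
  intro u w p
  induction p with
  | nil =>
    intro _ hu hw
    subst hw
    exact absurd (Finset.mem_erase.1 (hWS hu)).1 (not_not.2 rfl)
  | @cons a b c h q ih =>
    intro hp ha hc
    subst hc
    by_cases hb : b = c
    · subst hb
      refine ⟨SimpleGraph.Walk.cons h SimpleGraph.Walk.nil, ?_⟩
      intro x hx
      simp only [SimpleGraph.Walk.support_cons, SimpleGraph.Walk.support_nil,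
        List.mem_cons, List.mem_singleton] at hx
      rcases hx with rfl | hx
      · exact mem_insert_of_mem ha
      · simp at hx; subst hx; exact mem_insert_self _ _
    · have hbS : b ∈ S.erase c := by
        refine Finset.mem_erase.2 ⟨hb, hp b ?_⟩
        simp [SimpleGraph.Walk.support_cons]
      have hbW : b ∈ W := by
        refine hcl a ha (mem_compOf.2 ⟨hbS, ?_⟩)
        refine ⟨SimpleGraph.Walk.cons h SimpleGraph.Walk.nil, ?_⟩
        intro x hx
        simp only [SimpleGraph.Walk.support_cons, SimpleGraph.Walk.support_nil,
          List.mem_cons, List.mem_singleton] at hx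
        rcases hx with rfl | hx
        · exact hWS ha
        · simp at hx; subst hx; exact hbS
      have hq : ∀ x ∈ q.support, x ∈ S := by
        intro x hx; exact hp x (by simp [SimpleGraph.Walk.support_cons, hx])
      have step : ReachIn T (insert c W) a b := by
        refine ⟨SimpleGraph.Walk.cons h SimpleGraph.Walk.nil, ?_⟩
        intro x hx
        simp only [SimpleGraph.Walk.support_cons, SimpleGraph.Walk.support_nil,
          List.mem_cons, List.mem_singleton] at hx
        rcases hx with rfl | hx
        · exact mem_insert_of_mem ha
        · simp at hx; subst hx; exact mem_insert_of_mem hbW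
      exact step.trans (ih hq hbW rfl)

/-- Key connectivity lemma: `v` together with a union of components of `S \ {v}`. -/
lemma conn_insert_of_closed {S : Finset V} {v : V} (hS : Conn T S) (hv : v ∈ S)
    {W : Finset V} (hWS : W ⊆ S.erase v)
    (hcl : ∀ u ∈ W, compOf T (S.erase v) u ⊆ W) :
    Conn T (insert v W) := by
  have key : ∀ u ∈ insert v W, ReachIn T (insert v W) u v := by
    intro u hu
    rcases Finset.mem_insert.1 hu with rfl | hu
    · exact ReachIn.refl (mem_insert_self _ _)
    · obtain ⟨p, hp⟩ := hS.2 u (Finset.mem_of_mem_erase (hWS hu)) v hv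
      exact walk_to_insert hWS hcl p hp hu rfl
  exact ⟨⟨v, mem_insert_self _ _⟩, fun u hu w hw => (key u hu).trans (key w hw).symm⟩

lemma walk_stay_A {S A : Finset V} {v : V}
    (hnocross : ∀ x ∈ A, x ≠ v → ∀ y ∈ S, y ∉ A → ¬ T.Adj x y) :
    ∀ {u w : V} (p : T.Walk u w), (∀ x ∈ p.support, x ∈ S.erase v) → u ∈ A.erase v →
      ∀ x ∈ p.support, x ∈ A.erase v := by
  intro u w p
  induction p with
  | nil =>
    intro _ hu x hx
    simp only [SimpleGraph.Walk.support_nil, List.mem_singleton] at hx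
    subst hx; exact hu
  | @cons a b c h q ih =>
    intro hp ha x hx
    have hbS : b ∈ S.erase v := hp b (by simp [SimpleGraph.Walk.support_cons])
    have hbA : b ∈ A := by
      by_contra hbA
      exact hnocross a (Finset.mem_of_mem_erase ha) (Finset.ne_of_mem_erase ha) b
        (Finset.mem_of_mem_erase hbS) hbA h
    have hb : b ∈ A.erase v := Finset.mem_erase.2 ⟨Finset.ne_of_mem_erase hbS, hbA⟩
    have hq : ∀ x ∈ q.support, x ∈ S.erase v := fun x hx =>
      hp x (by simp [SimpleGraph.Walk.support_cons, hx])
    simp only [SimpleGraph.Walk.support_cons, List.mem_cons] at hx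
    rcases hx with rfl | hx
    · exact ha
    · exact ih hq hb x hx

lemma walk_stay_B {S A : Finset V} {v : V}
    (hnocross : ∀ x ∈ A, x ≠ v → ∀ y ∈ S, y ∉ A → ¬ T.Adj x y) :
    ∀ {u w : V} (p : T.Walk u w), (∀ x ∈ p.support, x ∈ S.erase v) → u ∈ S \ A →
      ∀ x ∈ p.support, x ∈ S \ A := by
  intro u w p
  induction p with
  | nil =>
    intro _ hu x hx
    simp only [SimpleGraph.Walk.support_nil, List.mem_singleton] at hx
    subst hx; exact hu
  | @cons a b c h q ih =>
    intro hp ha x hx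
    have hbS : b ∈ S.erase v := hp b (by simp [SimpleGraph.Walk.support_cons])
    have hbB : b ∈ S \ A := by
      rw [Finset.mem_sdiff]
      refine ⟨Finset.mem_of_mem_erase hbS, ?_⟩
      intro hbA
      exact hnocross b hbA (Finset.ne_of_mem_erase hbS) a (Finset.mem_sdiff.1 ha).1
        (Finset.mem_sdiff.1 ha).2 h.symm
    have hq : ∀ x ∈ q.support, x ∈ S.erase v := fun x hx =>
      hp x (by simp [SimpleGraph.Walk.support_cons, hx])
    simp only [SimpleGraph.Walk.support_cons, List.mem_cons] at hx
    rcases hx with rfl | hx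
    · exact ha
    · exact ih hq hbB x hx

lemma exists_crossing_walk {A : Finset V} :
    ∀ {u w : V} (p : T.Walk u w), u ∈ A → w ∉ A →
      ∃ a ∈ A, ∃ b ∈ p.support, b ∉ A ∧ T.Adj a b := by
  intro u w p
  induction p with
  | nil => intro hu hw; exact absurd hu hw
  | @cons a b c h q ih =>
    intro hu hw
    by_cases hb : b ∈ A
    · obtain ⟨a', ha', b', hb', hb'', hadj⟩ := ih hb hw
      exact ⟨a', ha', b', by simp [SimpleGraph.Walk.support_cons, hb'], hb'', hadj⟩
    · exact ⟨a, hu, b, by simp [SimpleGraph.Walk.support_cons], hb, h⟩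

/-- In a tree, the attachment vertex of a connected set to a disjoint connected set is unique. -/
lemma crossing_unique (hT : T.IsTree) {A B : Finset V} (hA : Conn T A) (hB : Conn T B)
    (hdisj : ∀ x ∈ A, x ∉ B) {a₁ b₁ a₂ b₂ : V} (ha₁ : a₁ ∈ A) (hb₁ : b₁ ∈ B)
    (ha₂ : a₂ ∈ A) (hb₂ : b₂ ∈ B) (e₁ : T.Adj a₁ b₁) (e₂ : T.Adj a₂ b₂) : a₁ = a₂ := by
  by_contra hne
  obtain ⟨pA, hpA⟩ := hA.2 a₁ ha₁ a₂ ha₂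
  set r := pA.bypass with hr
  have hrpath : r.IsPath := pA.bypass_isPath
  have hrsub : ∀ x ∈ r.support, x ∈ A := fun x hx => hpA x (pA.support_bypass_subset hx)
  by_cases hbb : b₁ = b₂
  · subst hbb
    have h2 : (SimpleGraph.Walk.cons e₁ (SimpleGraph.Walk.cons e₂.symm SimpleGraph.Walk.nil)
        : T.Walk a₁ a₂).IsPath := by
      rw [SimpleGraph.Walk.isPath_def]
      simp only [SimpleGraph.Walk.support_cons, SimpleGraph.Walk.support_nil]
      refine List.nodup_cons.2 ⟨?_, List.nodup_cons.2 ⟨?_, List.nodup_singleton _⟩⟩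
      · simp only [List.mem_cons, List.mem_singleton]
        intro hx
        rcases hx with rfl | rfl | hx
        · exact hdisj a₁ ha₁ hb₁
        · exact hne rfl
        · exact (List.not_mem_nil hx).elim
      · simp only [List.mem_cons, List.mem_singleton]
        intro hx
        rcases hx with rfl | hx
        · exact hdisj _ ha₂ hb₁
        · exact (List.not_mem_nil hx).elim
    have := (hT.existsUnique_path a₁ a₂).unique hrpath h2
    have hb₁r : b₁ ∈ r.support := by
      rw [this]; simp [SimpleGraph.Walk.support_cons]
    exact hdisj b₁ (hrsub b₁ hb₁r) hb₁
  · obtain ⟨pB, hpB⟩ := hB.2 b₁ hb₁ b₂ hb₂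
    set q := pB.bypass with hq
    have hqpath : q.IsPath := pB.bypass_isPath
    have hqsub : ∀ x ∈ q.support, x ∈ B := fun x hx => hpB x (pB.support_bypass_subset hx)
    have h2 : (SimpleGraph.Walk.cons e₁.symm (r.concat e₂) : T.Walk b₁ b₂).IsPath := by
      rw [SimpleGraph.Walk.isPath_def]
      simp only [SimpleGraph.Walk.support_cons, SimpleGraph.Walk.support_concat]
      refine List.nodup_cons.2 ⟨?_, ?_⟩
      · simp only [List.mem_append, List.mem_singleton]
        rintro (hx | rfl)
        · exact hdisj b₁ (hrsub b₁ hx) hb₁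
        · exact hbb rfl
      · rw [List.nodup_append]
        refine ⟨hrpath.support_nodup, List.nodup_singleton _, ?_⟩
        intro x hx
        simp only [List.mem_singleton]
        intro b hb hxb; rw [← hb, ← hxb] at hb₂
        exact hdisj x (hrsub x hx) hb₂
    have := (hT.existsUnique_path b₁ b₂).unique hqpath h2
    have ha₁q : a₁ ∈ q.support := by
      rw [this]
      simp only [SimpleGraph.Walk.support_cons, SimpleGraph.Walk.support_concat,
        List.concat_eq_append, List.mem_cons, List.mem_append, List.mem_singleton]
      exact Or.inr (Or.inl r.start_mem_support)
    exact hdisj a₁ ha₁ (hqsub a₁ ha₁q)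

end Part2


section Part3

variable (V) in
/-- Union of a list of finsets. -/
def unionL (l : List (Finset V)) : Finset V := l.foldr (· ∪ ·) ∅

variable (V) in
/-- Total cardinality of a list of finsets. -/
def totalL (l : List (Finset V)) : ℕ := (l.map Finset.card).sum

lemma unionL_nil : unionL V ([] : List (Finset V)) = ∅ := rfl
lemma unionL_cons {a : Finset V} {l : List (Finset V)} :
    unionL V (a :: l) = a ∪ unionL V l := rfl

lemma mem_unionL {l : List (Finset V)} {x : V} :
    x ∈ unionL V l ↔ ∃ P ∈ l, x ∈ P := by
  induction l with
  | nil => simp [unionL_nil]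
  | cons a t ih => simp [unionL_cons, ih]

lemma subset_unionL {l : List (Finset V)} {P : Finset V} (hP : P ∈ l) : P ⊆ unionL V l :=
  fun x hx => mem_unionL.2 ⟨P, hP, hx⟩

lemma unionL_append {l₁ l₂ : List (Finset V)} :
    unionL V (l₁ ++ l₂) = unionL V l₁ ∪ unionL V l₂ := by
  induction l₁ with
  | nil => simp [unionL_nil, unionL_cons]
  | cons a t ih => simp [unionL_cons, ih, Finset.union_assoc]

lemma totalL_cons {a : Finset V} {l : List (Finset V)} :
    totalL V (a :: l) = a.card + totalL V l := by simp [totalL]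

lemma totalL_append {l₁ l₂ : List (Finset V)} :
    totalL V (l₁ ++ l₂) = totalL V l₁ + totalL V l₂ := by simp [totalL]

lemma card_unionL {l : List (Finset V)} (h : l.Pairwise (fun a b => Disjoint a b)) :
    (unionL V l).card = totalL V l := by
  induction l with
  | nil => simp [unionL_nil, totalL]
  | cons a t ih =>
    rw [List.pairwise_cons] at h
    rw [unionL_cons, totalL_cons, Finset.card_union_of_disjoint, ih h.2]
    rw [Finset.disjoint_left]
    intro x hx hx'
    obtain ⟨P, hP, hxP⟩ := mem_unionL.1 hx'
    exact (Finset.disjoint_left.1 (h.1 P hP)) hx hxP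

lemma pairwise_of_join {α : Type*} {R : α → α → Prop} {gs : List (List α)}
    (h : gs.flatten.Pairwise R) : ∀ g ∈ gs, g.Pairwise R := by
  induction gs with
  | nil => simp
  | cons g t ih =>
    intro g' hg'
    rw [List.flatten_cons, List.pairwise_append] at h
    rcases List.mem_cons.1 hg' with rfl | hg'
    · exact h.1
    · exact ih h.2.1 g' hg'

lemma pairwise_disjoint_unions {gs : List (List (Finset V))}
    (h : gs.flatten.Pairwise (fun a b => Disjoint a b)) :
    (gs.map (unionL V)).Pairwise (fun a b => Disjoint a b) := by
  induction gs with
  | nil => simp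
  | cons g t ih =>
    rw [List.flatten_cons, List.pairwise_append] at h
    rw [List.map_cons, List.pairwise_cons]
    refine ⟨?_, ih h.2.1⟩
    intro U hU
    obtain ⟨g', hg', rfl⟩ := List.mem_map.1 hU
    rw [Finset.disjoint_left]
    intro x hx hx'
    obtain ⟨P, hP, hxP⟩ := mem_unionL.1 hx
    obtain ⟨P', hP', hxP'⟩ := mem_unionL.1 hx'
    have : Disjoint P P' := h.2.2 P hP P' (List.mem_flatten.2 ⟨g', hg', hP'⟩)
    exact Finset.disjoint_left.1 this hxP hxP'

lemma exists_prefix_aux {m : ℕ} :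
    ∀ (l : List (Finset V)) (c : ℕ), (∀ P ∈ l, P.card ≤ m) → c < m → m ≤ c + totalL V l →
      ∃ l₁ l₂, l = l₁ ++ l₂ ∧ m ≤ c + totalL V l₁ ∧ c + totalL V l₁ ≤ 2 * m - 1 := by
  intro l
  induction l with
  | nil =>
    intro c _ hc htot
    simp [totalL] at htot
    omega
  | cons a t ih =>
    intro c hcard hc htot
    by_cases h : m ≤ c + a.card
    · refine ⟨[a], t, rfl, ?_, ?_⟩
      · simpa [totalL] using h
      · have := hcard a List.mem_cons_self
        simp only [totalL, List.map_cons, List.map_nil, List.sum_cons, List.sum_nil]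
        omega
    · push_neg at h
      obtain ⟨l₁, l₂, heq, h1, h2⟩ := ih (c + a.card)
        (fun P hP => hcard P (List.mem_cons_of_mem _ hP)) h
        (by rw [totalL_cons] at htot; omega)
      refine ⟨a :: l₁, l₂, by simp [heq], ?_, ?_⟩
      · rw [totalL_cons]; omega
      · rw [totalL_cons]; omega

lemma grouping {m : ℕ} (hm : 1 ≤ m) :
    ∀ (n : ℕ) (l : List (Finset V)), l.length ≤ n → (∀ P ∈ l, P.card ≤ m) →
      m ≤ totalL V l →
      ∃ gs : List (List (Finset V)), gs.flatten = l ∧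
        ∀ g ∈ gs, m ≤ totalL V g ∧ totalL V g ≤ 3 * m - 1 := by
  intro n
  induction n with
  | zero =>
    intro l hlen _ htot
    rw [Nat.le_zero, List.length_eq_zero_iff] at hlen
    subst hlen
    simp [totalL] at htot
    omega
  | succ n ih =>
    intro l hlen hcard htot
    by_cases hbig : totalL V l ≤ 3 * m - 1
    · refine ⟨[l], by simp, ?_⟩
      intro g hg
      rcases List.mem_singleton.1 hg with rfl
      exact ⟨htot, hbig⟩
    · push_neg at hbig
      obtain ⟨l₁, l₂, heq, h1, h2⟩ := exists_prefix_aux l 0 hcard hm (by omega)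
      simp only [Nat.zero_add] at h1 h2
      have hl₁ne : l₁ ≠ [] := by
        rintro rfl
        simp [totalL] at h1
        omega
      have htot2 : totalL V l = totalL V l₁ + totalL V l₂ := by
        rw [heq, totalL_append]
      have hlen2 : l₂.length ≤ n := by
        have : l.length = l₁.length + l₂.length := by rw [heq, List.length_append]
        have : 1 ≤ l₁.length := by
          cases l₁ with
          | nil => exact absurd rfl hl₁ne
          | cons a t => simp
        omega
      obtain ⟨gs, hgs, hgsgood⟩ := ih l₂ hlen2
        (fun P hP => hcard P (by rw [heq]; exact List.mem_append_right _ hP))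
        (by omega)
      refine ⟨l₁ :: gs, by rw [List.flatten_cons, hgs]; exact heq.symm, ?_⟩
      intro g hg
      rcases List.mem_cons.1 hg with rfl | hg
      · exact ⟨h1, by omega⟩
      · exact hgsgood g hg

end Part3

section Part4

variable {T : SimpleGraph V}

lemma piecesFor {s : ℕ} (hs : 2 ≤ s) {S : Finset V} (hS : Conn T S) {v : V} (hv : v ∈ S)
    {U : Finset V} (hU : U ⊆ S.erase v)
    (hclosed : ∀ u ∈ U, compOf T (S.erase v) u ⊆ U)
    (hsmall : ∀ u ∈ U, (compOf T (S.erase v) u).card ≤ s - 1)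
    (hbig : s - 1 ≤ U.card) :
    ∃ ln : List (Finset V × V),
      unionL V (ln.map Prod.fst) = insert v U ∧
      (∀ P ∈ ln, Conn T P.1 ∧ s ≤ P.1.card ∧ P.1.card ≤ 3 * s ∧ P.1 ⊆ insert v U) ∧
      ln.Pairwise (fun p q => p.1 ∩ q.1 ⊆ {p.2} ∩ {q.2}) := by
  classical
  set cl := (U.toList.map (compOf T (S.erase v))).dedup with hcl
  have hmem : ∀ P ∈ cl, ∃ u ∈ U, P = compOf T (S.erase v) u := by
    intro P hP
    rw [hcl, List.mem_dedup, List.mem_map] at hP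
    obtain ⟨u, hu, rfl⟩ := hP
    exact ⟨u, Finset.mem_toList.1 hu, rfl⟩
  have hsubU : ∀ P ∈ cl, P ⊆ U := by
    intro P hP
    obtain ⟨u, hu, rfl⟩ := hmem P hP
    exact hclosed u hu
  have hcardP : ∀ P ∈ cl, P.card ≤ s - 1 := by
    intro P hP
    obtain ⟨u, hu, rfl⟩ := hmem P hP
    exact hsmall u hu
  have hdis : cl.Pairwise (fun a b => Disjoint a b) := by
    have hnd : cl.Nodup := List.nodup_dedup _
    refine hnd.imp_of_mem ?_
    intro P Q hP hQ hne
    rw [Finset.disjoint_left]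
    intro x hxP hxQ
    obtain ⟨u, hu, rfl⟩ := hmem P hP
    obtain ⟨w, hw, rfl⟩ := hmem Q hQ
    exact hne ((compOf_eq_of_mem hxP).symm.trans (compOf_eq_of_mem hxQ))
  have hunion : unionL V cl = U := by
    apply Finset.Subset.antisymm
    · intro x hx
      obtain ⟨P, hP, hxP⟩ := mem_unionL.1 hx
      exact hsubU P hP hxP
    · intro u hu
      refine mem_unionL.2 ⟨compOf T (S.erase v) u, ?_, self_mem_compOf (hU hu)⟩
      rw [hcl, List.mem_dedup, List.mem_map]
      exact ⟨u, Finset.mem_toList.2 hu, rfl⟩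
  have htot : totalL V cl = U.card := by rw [← card_unionL hdis, hunion]
  have hm : 1 ≤ s - 1 := by omega
  obtain ⟨gs, hflat, hgood⟩ := grouping hm cl.length cl le_rfl hcardP (by omega)
  have hdisflat : gs.flatten.Pairwise (fun a b => Disjoint a b) := by rw [hflat]; exact hdis
  have hGdis : (gs.map (unionL V)).Pairwise (fun a b => Disjoint a b) :=
    pairwise_disjoint_unions hdisflat
  have hWsub : ∀ g ∈ gs, unionL V g ⊆ U := by
    intro g hg x hx
    obtain ⟨P, hP, hxP⟩ := mem_unionL.1 hx
    exact hsubU P (by rw [← hflat]; exact List.mem_flatten.2 ⟨g, hg, hP⟩) hxP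
  have hWclosed : ∀ g ∈ gs, ∀ u ∈ unionL V g, compOf T (S.erase v) u ⊆ unionL V g := by
    intro g hg u hu
    obtain ⟨P, hP, huP⟩ := mem_unionL.1 hu
    have hPcl : P ∈ cl := by rw [← hflat]; exact List.mem_flatten.2 ⟨g, hg, hP⟩
    obtain ⟨w, hw, rfl⟩ := hmem P hPcl
    rw [compOf_eq_of_mem huP]
    exact (subset_unionL hP)
  have hvnotin : ∀ g ∈ gs, v ∉ unionL V g := by
    intro g hg hvin
    exact (Finset.mem_erase.1 (hU (hWsub g hg hvin))).1 rfl
  have hWcard : ∀ g ∈ gs, (unionL V g).card = totalL V g := by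
    intro g hg
    exact card_unionL (pairwise_of_join hdisflat g hg)
  refine ⟨gs.map (fun g => (insert v (unionL V g), v)), ?_, ?_, ?_⟩
  · apply Finset.Subset.antisymm
    · intro x hx
      obtain ⟨P, hP, hxP⟩ := mem_unionL.1 hx
      simp only [List.map_map, List.mem_map, Function.comp] at hP
      obtain ⟨g, hg, rfl⟩ := hP
      rcases Finset.mem_insert.1 hxP with rfl | hxP
      · exact Finset.mem_insert_self _ _
      · exact Finset.mem_insert_of_mem (hWsub g hg hxP)
    · have hgsne : gs ≠ [] := by
        rintro rfl
        simp at hflat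
        rw [hflat] at htot
        simp [totalL] at htot
        omega
      intro x hx
      rcases Finset.mem_insert.1 hx with rfl | hx
      · obtain ⟨g, hg⟩ := List.exists_mem_of_ne_nil gs hgsne
        refine mem_unionL.2 ⟨insert x (unionL V g), ?_, Finset.mem_insert_self _ _⟩
        simp only [List.map_map, List.mem_map, Function.comp]
        exact ⟨g, hg, rfl⟩
      · rw [← hunion, ← hflat] at hx
        obtain ⟨P, hP, hxP⟩ := mem_unionL.1 hx
        obtain ⟨g, hg, hPg⟩ := List.mem_flatten.1 hP
        refine mem_unionL.2 ⟨insert v (unionL V g), ?_, Finset.mem_insert_of_mem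
          (subset_unionL hPg hxP)⟩
        simp only [List.map_map, List.mem_map, Function.comp]
        exact ⟨g, hg, rfl⟩
  · intro P hP
    rw [List.mem_map] at hP
    obtain ⟨g, hg, rfl⟩ := hP
    dsimp only
    have h1 : Conn T (insert v (unionL V g)) :=
      conn_insert_of_closed hS hv (fun x hx => hU (hWsub g hg hx)) (hWclosed g hg)
    have h2 : (insert v (unionL V g)).card = totalL V g + 1 := by
      rw [Finset.card_insert_of_notMem (hvnotin g hg), hWcard g hg]
    obtain ⟨hg1, hg2⟩ := hgood g hg
    refine ⟨h1, by omega, by omega, ?_⟩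
    exact Finset.insert_subset_insert _ (hWsub g hg)
  · rw [List.pairwise_map]
    rw [List.pairwise_map] at hGdis
    refine hGdis.imp ?_
    intro g g' hdisj
    intro x hx
    rw [Finset.mem_inter] at hx
    rcases Finset.mem_insert.1 hx.1 with rfl | hx1
    · simp
    · rcases Finset.mem_insert.1 hx.2 with rfl | hx2
      · simp
      · exact absurd hx2 (Finset.disjoint_left.1 hdisj hx1)

end Part4

section Part5

variable {T : SimpleGraph V}

lemma aux_main (hT : T.IsTree) {s : ℕ} (hs : 2 ≤ s) :
    ∀ n : ℕ, ∀ S : Finset V, S.card ≤ n → Conn T S → s ≤ S.card →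
      ∃ l : List (Finset V × V),
        unionL V (l.map Prod.fst) = S ∧
        (∀ P ∈ l, Conn T P.1 ∧ s ≤ P.1.card ∧ P.1.card ≤ 3 * s) ∧
        l.Pairwise (fun p q => p.1 ∩ q.1 ⊆ {p.2} ∩ {q.2}) := by
  intro n
  induction n with
  | zero => intro S h0 _ hcard; omega
  | succ n ih =>
    intro S hn hconn hcard
    by_cases h3 : S.card ≤ 3 * s
    · obtain ⟨x, hx⟩ := hconn.1
      refine ⟨[(S, x)], ?_, ?_, ?_⟩
      · simp [unionL_cons, unionL_nil]
      · intro P hP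
        rcases List.mem_singleton.1 hP with rfl
        exact ⟨hconn, hcard, h3⟩
      · simp
    · push_neg at h3
      classical
      set Afam := S.powerset.filter
        (fun A => s ≤ A.card ∧ Conn T A ∧ (A = S ∨ Conn T (S \ A))) with hAfamdef
      have hSfam : S ∈ Afam := by
        rw [hAfamdef, Finset.mem_filter]
        exact ⟨Finset.mem_powerset_self S, hcard, hconn, Or.inl rfl⟩
      obtain ⟨A, hAfammem, hAmin⟩ := Finset.exists_min_image Afam Finset.card ⟨S, hSfam⟩
      rw [hAfamdef, Finset.mem_filter] at hAfammem
      obtain ⟨hApow, hAcard, hAconn, hAor⟩ := hAfammem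
      have hAS : A ⊆ S := Finset.mem_powerset.1 hApow
      have hv : ∃ v ∈ A, ∀ x ∈ A, x ≠ v → ∀ y ∈ S, y ∉ A → ¬ T.Adj x y := by
        by_cases hASeq : A = S
        · obtain ⟨v, hv⟩ := hAconn.1
          exact ⟨v, hv, fun x _ _ y hyS hyA _ => absurd (hASeq ▸ hyS) hyA⟩
        · have hBconn : Conn T (S \ A) := hAor.resolve_left hASeq
          obtain ⟨a0, ha0⟩ := hAconn.1
          obtain ⟨b0, hb0⟩ := hBconn.1
          obtain ⟨p, hp⟩ := hconn.2 a0 (hAS ha0) b0 (Finset.mem_sdiff.1 hb0).1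
          obtain ⟨v, hvA, b, hbsup, hbA, hadj⟩ :=
            exists_crossing_walk p ha0 (Finset.mem_sdiff.1 hb0).2
          have hbS : b ∈ S := hp b hbsup
          refine ⟨v, hvA, ?_⟩
          intro x hxA hxv y hyS hyA hadj'
          have hdisj : ∀ z ∈ A, z ∉ S \ A := fun z hz hz' => (Finset.mem_sdiff.1 hz').2 hz
          exact hxv (crossing_unique hT hAconn hBconn hdisj hxA
            (Finset.mem_sdiff.2 ⟨hyS, hyA⟩) hvA (Finset.mem_sdiff.2 ⟨hbS, hbA⟩) hadj' hadj)
      obtain ⟨v, hvA, hnocross⟩ := hv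
      have hvS : v ∈ S := hAS hvA
      have hclA : ∀ u ∈ A.erase v, compOf T (S.erase v) u ⊆ A.erase v := by
        intro u hu w hw
        rw [mem_compOf] at hw
        obtain ⟨p, hp⟩ := hw.2
        exact walk_stay_A hnocross p hp hu w p.end_mem_support
      have hsmallA : ∀ u ∈ A.erase v, (compOf T (S.erase v) u).card ≤ s - 1 := by
        intro u hu
        by_contra hDbig
        push_neg at hDbig
        set D := compOf T (S.erase v) u with hDdef
        have hDsub : D ⊆ A.erase v := hclA u hu
        have hDS : D ⊆ S := fun x hx => hAS (Finset.mem_of_mem_erase (hDsub hx))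
        have huSe : u ∈ S.erase v := Finset.mem_erase.2
          ⟨(Finset.mem_erase.1 hu).1, hAS (Finset.mem_of_mem_erase hu)⟩
        have hDconn : Conn T D := conn_compOf huSe
        have hSD : Conn T (S \ D) := by
          have heq : S \ D = insert v ((S.erase v) \ D) := by
            ext x
            simp only [Finset.mem_sdiff, Finset.mem_insert, Finset.mem_erase]
            constructor
            · rintro ⟨hxS, hxD⟩
              by_cases hxv : x = v
              · exact Or.inl hxv
              · exact Or.inr ⟨⟨hxv, hxS⟩, hxD⟩
            · rintro (rfl | ⟨⟨_, hxS⟩, hxD⟩)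
              · refine ⟨hvS, fun hvD => ?_⟩
                exact (Finset.mem_erase.1 (hDsub hvD)).1 rfl
              · exact ⟨hxS, hxD⟩
          rw [heq]
          refine conn_insert_of_closed hconn hvS Finset.sdiff_subset ?_
          intro x hx w hw
          rw [Finset.mem_sdiff] at hx ⊢
          refine ⟨compOf_subset hw, fun hwD => ?_⟩
          have h1 : compOf T (S.erase v) w = compOf T (S.erase v) x := compOf_eq_of_mem hw
          have h2 : compOf T (S.erase v) w = D := by rw [hDdef]; exact compOf_eq_of_mem hwD
          have hx2 : x ∈ compOf T (S.erase v) x := self_mem_compOf hx.1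
          rw [← h1, h2] at hx2
          exact hx.2 hx2
        have hDfam : D ∈ Afam := by
          rw [hAfamdef, Finset.mem_filter]
          exact ⟨Finset.mem_powerset.2 hDS, by omega, hDconn, Or.inr hSD⟩
        have hmin := hAmin D hDfam
        have hle : D.card ≤ (A.erase v).card := Finset.card_le_card hDsub
        rw [Finset.card_erase_of_mem hvA] at hle
        omega
      by_cases hrest : s ≤ (S \ A).card
      · have hASne : A ≠ S := by
          rintro rfl
          rw [Finset.sdiff_self] at hrest
          simp at hrest
          omega
        have hBconn : Conn T (S \ A) := hAor.resolve_left hASne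
        have hcardB : (S \ A).card ≤ n := by
          have h1 : (S \ A).card = S.card - A.card := Finset.card_sdiff_of_subset hAS
          omega
        obtain ⟨lold, holdU, holdP, holdPw⟩ := ih (S \ A) hcardB hBconn hrest
        have hUsub : A.erase v ⊆ S.erase v := Finset.erase_subset_erase v hAS
        have hbigU : s - 1 ≤ (A.erase v).card := by
          rw [Finset.card_erase_of_mem hvA]; omega
        obtain ⟨lnew, hnewU, hnewP, hnewPw⟩ :=
          piecesFor hs hconn hvS hUsub hclA hsmallA hbigU
        have hinsA : insert v (A.erase v) = A := Finset.insert_erase hvA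
        refine ⟨lnew ++ lold, ?_, ?_, ?_⟩
        · rw [List.map_append, unionL_append, hnewU, holdU, hinsA]
          exact Finset.union_sdiff_of_subset hAS
        · intro P hP
          rcases List.mem_append.1 hP with hP | hP
          · obtain ⟨c1, c2, c3, _⟩ := hnewP P hP
            exact ⟨c1, c2, c3⟩
          · exact holdP P hP
        · rw [List.pairwise_append]
          refine ⟨hnewPw, holdPw, ?_⟩
          intro p hp q hq
          have hpsub : p.1 ⊆ A := by rw [← hinsA]; exact (hnewP p hp).2.2.2
          have hqsub : q.1 ⊆ S \ A := by
            rw [← holdU]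
            exact subset_unionL (List.mem_map_of_mem (f := Prod.fst) hq)
          intro x hx
          rw [Finset.mem_inter] at hx
          exact ((Finset.mem_sdiff.1 (hqsub hx.2)).2 (hpsub hx.1)).elim
      · push_neg at hrest
        have hclS : ∀ u ∈ S.erase v, compOf T (S.erase v) u ⊆ S.erase v :=
          fun u _ => compOf_subset
        have hsmallS : ∀ u ∈ S.erase v, (compOf T (S.erase v) u).card ≤ s - 1 := by
          intro u hu
          by_cases huA : u ∈ A
          · exact hsmallA u (Finset.mem_erase.2 ⟨(Finset.mem_erase.1 hu).1, huA⟩)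
          · have hsub : compOf T (S.erase v) u ⊆ S \ A := by
              intro w hw
              rw [mem_compOf] at hw
              obtain ⟨p, hp⟩ := hw.2
              exact walk_stay_B hnocross p hp
                (Finset.mem_sdiff.2 ⟨(Finset.mem_erase.1 hu).2, huA⟩) w p.end_mem_support
            have := Finset.card_le_card hsub
            omega
        have hbigU : s - 1 ≤ (S.erase v).card := by
          rw [Finset.card_erase_of_mem hvS]; omega
        obtain ⟨lnew, hnewU, hnewP, hnewPw⟩ :=
          piecesFor hs hconn hvS (Finset.Subset.refl _) hclS hsmallS hbigU
        refine ⟨lnew, ?_, ?_, hnewPw⟩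
        · rw [hnewU]; exact Finset.insert_erase hvS
        · intro P hP
          obtain ⟨c1, c2, c3, _⟩ := hnewP P hP
          exact ⟨c1, c2, c3⟩

end Part5

section Part6

variable {T : SimpleGraph V}

lemma reachIn_induce {S : Finset V} :
    ∀ {u w : V} (p : T.Walk u w), (∀ x ∈ p.support, x ∈ S) →
      ∀ (hu : u ∈ (↑S : Set V)) (hw : w ∈ (↑S : Set V)),
      (T.induce (↑S : Set V)).Reachable ⟨u, hu⟩ ⟨w, hw⟩ := by
  intro u w p
  induction p with
  | nil =>
    intro _ hu hw
    exact SimpleGraph.Reachable.refl _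
  | @cons a b c h q ih =>
    intro hp hu hw
    have hb : b ∈ S := hp b (by simp [SimpleGraph.Walk.support_cons])
    have hb' : b ∈ (↑S : Set V) := hb
    have step : (T.induce (↑S : Set V)).Adj ⟨a, hu⟩ ⟨b, hb'⟩ := h
    exact step.reachable.trans
      (ih (fun x hx => hp x (by simp [SimpleGraph.Walk.support_cons, hx])) hb' hw)

lemma conn_induce {S : Finset V} (h : Conn T S) : (T.induce (↑S : Set V)).Connected := by
  rw [SimpleGraph.connected_iff]
  constructor
  · rintro ⟨u, hu⟩ ⟨w, hw⟩
    obtain ⟨p, hp⟩ := h.2 u (Finset.mem_coe.1 hu) w (Finset.mem_coe.1 hw)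
    exact reachIn_induce p hp hu hw
  · obtain ⟨x, hx⟩ := h.1
    exact ⟨⟨x, hx⟩⟩

end Part6
end TreeAP

/-- Fact 3.8: every finite tree with at least `s` vertices admits an
almost-partition of its vertex set into connected pieces of size in `[s, 3s]`. -/
theorem tree_almost_partition {V : Type*} [Fintype V] [DecidableEq V]
    (T : SimpleGraph V) (hT : T.IsTree) (s : ℕ) (hs : 0 < s)
    (hcard : s ≤ Fintype.card V) :
    ∃ (k : ℕ) (A : Fin k → Finset V),
      (∀ i, (A i).Nonempty) ∧
      (Finset.univ.biUnion A = Finset.univ) ∧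
      (∀ j, (A j ∩ (Finset.univ.filter (fun i => i ≠ j)).biUnion A).card ≤ 1) ∧
      (∀ i, (T.induce (↑(A i) : Set V)).Connected) ∧
      (∀ i, s ≤ (A i).card ∧ (A i).card ≤ 3 * s) := by
  classical
  have hVne : Nonempty V := Fintype.card_pos_iff.1 (lt_of_lt_of_le hs hcard)
  rcases Nat.lt_or_ge s 2 with hs2 | hs2
  · -- s = 1 : use singletons
    have hs1 : s = 1 := by omega
    subst hs1
    set e := Fintype.equivFin V with he
    refine ⟨Fintype.card V, fun i => {e.symm i}, ?_, ?_, ?_, ?_, ?_⟩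
    · intro i; exact Finset.singleton_nonempty _
    · ext x
      simp only [Finset.mem_biUnion, Finset.mem_univ, iff_true, Finset.mem_singleton]
      exact ⟨e x, trivial, by simp⟩
    · intro j
      calc (({e.symm j} : Finset V) ∩ _).card ≤ ({e.symm j} : Finset V).card :=
            Finset.card_le_card (Finset.inter_subset_left)
        _ = 1 := Finset.card_singleton _
    · intro i
      refine TreeAP.conn_induce ⟨Finset.singleton_nonempty _, ?_⟩
      intro u hu w hw
      rw [Finset.mem_singleton] at hu hw
      subst hu; subst hw
      exact TreeAP.ReachIn.refl (Finset.mem_singleton_self _)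
    · intro i; simp
  · -- s ≥ 2 : main construction
    have hconnU : TreeAP.Conn T Finset.univ := by
      refine ⟨Finset.univ_nonempty, ?_⟩
      intro u _ w _
      obtain ⟨p⟩ := hT.isConnected.preconnected u w
      exact ⟨p, fun x _ => Finset.mem_univ x⟩
    obtain ⟨l, hU, hP, hPw⟩ := TreeAP.aux_main hT hs2 (Fintype.card V) Finset.univ
      (by rw [Finset.card_univ]) hconnU (by rwa [Finset.card_univ])
    have hmem : ∀ i : Fin l.length, l.get i ∈ l := fun i => by
      simpa [Fin.eta] using l.get_mem i.1 i.2
    refine ⟨l.length, fun i => (l.get i).1, ?_, ?_, ?_, ?_, ?_⟩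
    · intro i
      have := (hP _ (hmem i)).2.1
      exact Finset.card_pos.1 (lt_of_lt_of_le hs this)
    · apply Finset.Subset.antisymm (Finset.subset_univ _)
      intro x _
      have hx : x ∈ TreeAP.unionL V (l.map Prod.fst) := by rw [hU]; exact Finset.mem_univ x
      obtain ⟨P, hPmem, hxP⟩ := TreeAP.mem_unionL.1 hx
      obtain ⟨pq, hpq, rfl⟩ := List.mem_map.1 hPmem
      obtain ⟨i, rfl⟩ := List.mem_iff_get.1 hpq
      exact Finset.mem_biUnion.2 ⟨i, Finset.mem_univ _, hxP⟩
    · intro j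
      have hsub : (l.get j).1 ∩ (Finset.univ.filter (fun i => i ≠ j)).biUnion
          (fun i => (l.get i).1) ⊆ {(l.get j).2} := by
        intro x hx
        rw [Finset.mem_inter] at hx
        obtain ⟨i, hi, hxi⟩ := Finset.mem_biUnion.1 hx.2
        rw [Finset.mem_filter] at hi
        have hij : i ≠ j := hi.2
        rcases lt_or_gt_of_ne hij with hlt | hgt
        · have hR := List.pairwise_iff_get.1 hPw i j hlt
          have := hR (Finset.mem_inter.2 ⟨hxi, hx.1⟩)
          exact Finset.mem_of_mem_inter_right this
        · have hR := List.pairwise_iff_get.1 hPw j i hgt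
          have := hR (Finset.mem_inter.2 ⟨hx.1, hxi⟩)
          exact Finset.mem_of_mem_inter_left this
      calc _ ≤ ({(l.get j).2} : Finset V).card := Finset.card_le_card hsub
        _ = 1 := Finset.card_singleton _
    · intro i
      exact TreeAP.conn_induce (hP _ (hmem i)).1
    · intro i
      exact ⟨(hP _ (hmem i)).2.1, (hP _ (hmem i)).2.2⟩
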